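/- Let ψ1 and ψ2 be modal μ-calculus formulas such that ψ1∧ψ2 is in normal form, let κ : P → Set S be a valuation and s : S a state. Then Player 0 wins the model-checking parity game G(ψ1∧ψ2) from the vertex (ψ1∧ψ2, s) if and only if Player 0 wins G(ψ1) from (ψ1, s) and Player 0 wins G(ψ2) from (ψ2, s). -/

import Mathlib

/-- Formulas of the modal μ-calculus over a type `P` of propositional variables:
`⊥ | ⊤ | p | ¬p | φ∧φ | φ∨φ | □φ | ◇φ | μp.φ | νp.φ`. -/
inductive MuForm (P : Type*) where
  | bot : MuForm P
  | top : MuForm P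
  | var (p : P) : MuForm P
  | nvar (p : P) : MuForm P
  | and (φ ψ : MuForm P) : MuForm P
  | or (φ ψ : MuForm P) : MuForm P
  | box (φ : MuForm P) : MuForm P
  | dia (φ : MuForm P) : MuForm P
  | mu (p : P) (φ : MuForm P) : MuForm P
  | nu (p : P) (φ : MuForm P) : MuForm P
  deriving DecidableEq

variable {P S : Type*}

/-- The set of free variables of a μ-calculus formula (`μp`/`νp` bind `p`). -/
def MuForm.freeVars : MuForm P → Set P
  | .bot => ∅
  | .top => ∅
  | .var p => {p}
  | .nvar p => {p}
  | .and φ ψ => φ.freeVars ∪ ψ.freeVars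
  | .or φ ψ => φ.freeVars ∪ ψ.freeVars
  | .box φ => φ.freeVars
  | .dia φ => φ.freeVars
  | .mu p φ => φ.freeVars \ {p}
  | .nu p φ => φ.freeVars \ {p}

/-- `p` occurs only positively in a μ-calculus formula. -/
def MuForm.PositiveIn (p : P) : MuForm P → Prop
  | .bot => True
  | .top => True
  | .var _ => True
  | .nvar q => q ≠ p
  | .and φ ψ => φ.PositiveIn p ∧ ψ.PositiveIn p
  | .or φ ψ => φ.PositiveIn p ∧ ψ.PositiveIn p
  | .box φ => φ.PositiveIn p
  | .dia φ => φ.PositiveIn p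
  | .mu q φ => q = p ∨ φ.PositiveIn p
  | .nu q φ => q = p ∨ φ.PositiveIn p

/-- Semantics `⟦φ⟧κ ⊆ S` of a μ-calculus formula in the Kripke structure with
state type `S`, transition relation `R`, and valuation `κ : P → Set S`. -/
def MuForm.sem [DecidableEq P] (R : S → S → Prop) : MuForm P → (P → Set S) → Set S
  | .bot, _ => ∅
  | .top, _ => Set.univ
  | .var p, κ => κ p
  | .nvar p, κ => (κ p)ᶜ
  | .and φ ψ, κ => φ.sem R κ ∩ ψ.sem R κ
  | .or φ ψ, κ => φ.sem R κ ∪ ψ.sem R κ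
  | .box φ, κ => {s | ∀ s', R s s' → s' ∈ φ.sem R κ}
  | .dia φ, κ => {s | ∃ s', R s s' ∧ s' ∈ φ.sem R κ}
  | .mu p φ, κ => ⋂₀ {X : Set S | φ.sem R (Function.update κ p X) ⊆ X}
  | .nu p φ, κ => ⋃₀ {X : Set S | X ⊆ φ.sem R (Function.update κ p X)}
variable [DecidableEq P]

/-- The finite set of subformulas of a μ-calculus formula. -/
def MuForm.subformulas : MuForm P → Finset (MuForm P)
  | .bot => {.bot}
  | .top => {.top}
  | .var p => {.var p}
  | .nvar p => {.nvar p}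
  | .and φ ψ => insert (.and φ ψ) (φ.subformulas ∪ ψ.subformulas)
  | .or φ ψ => insert (.or φ ψ) (φ.subformulas ∪ ψ.subformulas)
  | .box φ => insert (.box φ) φ.subformulas
  | .dia φ => insert (.dia φ) φ.subformulas
  | .mu p φ => insert (.mu p φ) φ.subformulas
  | .nu p φ => insert (.nu p φ) φ.subformulas

/-- Size of a formula (used as a termination measure). -/
def MuForm.fsize : MuForm P → ℕ
  | .bot => 1
  | .top => 1
  | .var _ => 1
  | .nvar _ => 1
  | .and φ ψ => φ.fsize + ψ.fsize + 1
  | .or φ ψ => φ.fsize + ψ.fsize + 1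
  | .box φ => φ.fsize + 1
  | .dia φ => φ.fsize + 1
  | .mu _ φ => φ.fsize + 1
  | .nu _ φ => φ.fsize + 1

theorem MuForm.fsize_le_of_mem_subformulas :
    ∀ {φ ψ : MuForm P}, ψ ∈ φ.subformulas → ψ.fsize ≤ φ.fsize := by
  intro φ
  induction φ with
  | bot => intro ψ h; simp [MuForm.subformulas] at h; subst h; exact le_refl _
  | top => intro ψ h; simp [MuForm.subformulas] at h; subst h; exact le_refl _
  | var p => intro ψ h; simp [MuForm.subformulas] at h; subst h; exact le_refl _
  | nvar p => intro ψ h; simp [MuForm.subformulas] at h; subst h; exact le_refl _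
  | and φ₁ φ₂ ih₁ ih₂ =>
      intro ψ h; simp [MuForm.subformulas] at h
      rcases h with h | h | h
      · subst h; exact le_refl _
      · exact le_trans (ih₁ h) (by simp [MuForm.fsize]; omega)
      · exact le_trans (ih₂ h) (by simp [MuForm.fsize]; omega)
  | or φ₁ φ₂ ih₁ ih₂ =>
      intro ψ h; simp [MuForm.subformulas] at h
      rcases h with h | h | h
      · subst h; exact le_refl _
      · exact le_trans (ih₁ h) (by simp [MuForm.fsize]; omega)
      · exact le_trans (ih₂ h) (by simp [MuForm.fsize]; omega)
  | box φ ih =>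
      intro ψ h; simp [MuForm.subformulas] at h
      rcases h with h | h
      · subst h; exact le_refl _
      · exact le_trans (ih h) (by simp [MuForm.fsize])
  | dia φ ih =>
      intro ψ h; simp [MuForm.subformulas] at h
      rcases h with h | h
      · subst h; exact le_refl _
      · exact le_trans (ih h) (by simp [MuForm.fsize])
  | mu p φ ih =>
      intro ψ h; simp [MuForm.subformulas] at h
      rcases h with h | h
      · subst h; exact le_refl _
      · exact le_trans (ih h) (by simp [MuForm.fsize])
  | nu p φ ih =>
      intro ψ h; simp [MuForm.subformulas] at h
      rcases h with h | h
      · subst h; exact le_refl _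
      · exact le_trans (ih h) (by simp [MuForm.fsize])

open Classical in
/-- The alternation depth `α(φ)` of a μ-calculus formula.  For `μp.ψ` it is the
maximum of `{1, α(ψ)}` together with all values `α(νp'.ψ') + 1` for ν-subformulas
`νp'.ψ'` of `ψ` in which `p` occurs free, and dually for `νp.ψ`. -/
noncomputable def MuForm.alt : MuForm P → ℕ
  | .bot => 0
  | .top => 0
  | .var _ => 0
  | .nvar _ => 0
  | .and φ ψ => max φ.alt ψ.alt
  | .or φ ψ => max φ.alt ψ.alt
  | .box φ => φ.alt
  | .dia φ => φ.alt
  | .mu p φ => max (max 1 φ.alt)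
      (φ.subformulas.attach.sup fun ψ =>
        if (∃ p' ψ', ψ.1 = MuForm.nu p' ψ') ∧ p ∈ ψ.1.freeVars then ψ.1.alt + 1 else 0)
  | .nu p φ => max (max 1 φ.alt)
      (φ.subformulas.attach.sup fun ψ =>
        if (∃ p' ψ', ψ.1 = MuForm.mu p' ψ') ∧ p ∈ ψ.1.freeVars then ψ.1.alt + 1 else 0)
termination_by φ => φ.fsize
decreasing_by
  all_goals simp [MuForm.fsize]
  all_goals try omega
  all_goals
    have := MuForm.fsize_le_of_mem_subformulas ψ.2
    omega

/-- A parity game: vertices `V`, each owned by Player `0` or Player `1`,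
an edge relation `E`, and a priority function `prio` with finite range. -/
structure ParityGame (V : Type*) where
  owner : V → Fin 2
  E : V → V → Prop
  prio : V → ℕ
  finRange : (Set.range prio).Finite

namespace ParityGame

variable {V : Type*} (G : ParityGame V)

/-- A dead end: a vertex without `E`-successor. -/
def DeadEnd (v : V) : Prop := ∀ w, ¬ G.E v w

/-- `π : ℕ → V` is an infinite play (all consecutive steps are edges). -/
def InfPlay (π : ℕ → V) : Prop := ∀ i, G.E (π i) (π (i + 1))

/-- The set of priorities occurring infinitely often along an infinite play. -/
def InfOften (π : ℕ → V) : Set ℕ := {c | ∀ N, ∃ n, N ≤ n ∧ G.prio (π n) = c}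

/-- An infinite play is won by Player `0` iff the maximum priority occurring
infinitely often is even (max-parity condition). -/
def WinInf (π : ℕ → V) : Prop := Even (sSup (G.InfOften π))

/-- `l` is a finite play from `v`: a nonempty list starting at `v`, with
consecutive `E`-edges, whose last vertex is a dead end. -/
def FinPlay (v : V) (l : List V) : Prop :=
  l.head? = some v ∧ l.Chain' G.E ∧ ∀ x ∈ l.getLast?, G.DeadEnd x

/-- A finite play is won by Player `0` iff its last vertex belongs to Player `1`. -/
def WinFin (l : List V) : Prop := ∀ x ∈ l.getLast?, G.owner x = 1

/-- A strategy (for Player `0`) is valid if it assigns to every finite nonempty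
`E`-path ending in a Player-`0` vertex that is not a dead end an `E`-successor
of that vertex. -/
def ValidStrat (σ : List V → V) : Prop :=
  ∀ (l : List V) (x : V), l.Chain' G.E → l.getLast? = some x →
    G.owner x = 0 → ¬ G.DeadEnd x → G.E x (σ l)

/-- An infinite play conforms to a strategy `σ` if every step taken from a
Player-`0` vertex follows `σ` applied to the path traversed so far. -/
def ConformsInf (σ : List V → V) (π : ℕ → V) : Prop :=
  ∀ i, G.owner (π i) = 0 → π (i + 1) = σ (List.ofFn fun j : Fin (i + 1) => π j)

/-- A finite play conforms to a strategy `σ` if every step taken from a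
Player-`0` vertex follows `σ` applied to the path traversed so far. -/
def ConformsFin (σ : List V → V) (l : List V) : Prop :=
  ∀ (i : ℕ) (h : i + 1 < l.length),
    G.owner (l.get ⟨i, Nat.lt_of_succ_lt h⟩) = 0 →
    l.get ⟨i + 1, h⟩ = σ (l.take (i + 1))

/-- `σ` is a winning strategy for Player `0` from `v`: it is a valid strategy
and every (infinite or finite) play from `v` conforming to it is won by
Player `0`. -/
def WinningFrom (σ : List V → V) (v : V) : Prop :=
  G.ValidStrat σ ∧
    (∀ π : ℕ → V, π 0 = v → G.InfPlay π → G.ConformsInf σ π → G.WinInf π) ∧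
    (∀ l : List V, G.FinPlay v l → G.ConformsFin σ l → G.WinFin l)

/-- Player `0` wins the game from `v` if some strategy is winning for
Player `0` from `v`. -/
def Wins0 (v : V) : Prop := ∃ σ : List V → V, G.WinningFrom σ v

/-- A strategy is memoryless if its value depends only on the last vertex of
the path. -/
def Memoryless (σ : List V → V) : Prop :=
  ∀ (l l' : List V) (x : V), l.getLast? = some x → l'.getLast? = some x → σ l = σ l'

end ParityGame

theorem MuForm.self_mem_subformulas (φ : MuForm P) : φ ∈ φ.subformulas := by
  cases φ <;> simp [MuForm.subformulas]

/-- `p` is bound in `φ`: some fixpoint subformula of `φ` binds `p`. -/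
def MuForm.BoundIn (p : P) (φ : MuForm P) : Prop :=
  ∃ ψ, MuForm.mu p ψ ∈ φ.subformulas ∨ MuForm.nu p ψ ∈ φ.subformulas

/-- `φ` is in normal form: every variable is bound by at most one fixpoint
operator occurring in `φ` (the fixpoint subformula binding a given variable is
unique), and no variable occurs both free and bound in `φ`. -/
def MuForm.NormalForm (φ : MuForm P) : Prop :=
  (∀ (p : P) (χ₁ χ₂ : MuForm P), χ₁ ∈ φ.subformulas → χ₂ ∈ φ.subformulas →
      (∃ ψ, χ₁ = MuForm.mu p ψ ∨ χ₁ = MuForm.nu p ψ) →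
      (∃ ψ, χ₂ = MuForm.mu p ψ ∨ χ₂ = MuForm.nu p ψ) → χ₁ = χ₂) ∧
    ∀ p ∈ φ.freeVars, ¬ MuForm.BoundIn p φ

/-- The vertices `(ψ, s)` of the model-checking game for `φ` that belong to
Player `0`: `ψ` is `⊥`, a disjunction, a `◇`-formula, a `μ`- or `ν`-formula, a
variable bound in `φ`, a variable `p` free in `φ` with `s ∉ κ p`, or a literal
`¬p` with `s ∈ κ p`. -/
def mcPlayer0 (φ : MuForm P) (κ : P → Set S) : MuForm P × S → Prop :=
  fun v => match v.1 with
  | .bot => True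
  | .top => False
  | .var p => MuForm.BoundIn p φ ∨ (p ∈ φ.freeVars ∧ v.2 ∉ κ p)
  | .nvar p => v.2 ∈ κ p
  | .and _ _ => False
  | .or _ _ => True
  | .box _ => False
  | .dia _ => True
  | .mu _ _ => True
  | .nu _ _ => True

/-- The edges of the model-checking game for `φ`: from `(ψ₁∧ψ₂, s)` and
`(ψ₁∨ψ₂, s)` to `(ψ₁, s)` and `(ψ₂, s)`; from `(□ψ, s)` and `(◇ψ, s)` to
`(ψ, s')` for every `s'` with `R s s'`; from `(μp.ψ, s)` and `(νp.ψ, s)` to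
`(ψ, s)`; from `(p, s)` to `(φ_p, s)` where `φ_p` is the fixpoint subformula of
`φ` binding `p`; no edges from `(⊥, s)`, `(⊤, s)`, `(¬p, s)`, or `(p, s)` with
`p` free in `φ`. -/
def mcEdge (R : S → S → Prop) (φ : MuForm P) :
    MuForm P × S → MuForm P × S → Prop :=
  fun v w => match v.1 with
  | .bot => False
  | .top => False
  | .var p => w.2 = v.2 ∧ w.1 ∈ φ.subformulas ∧
      ∃ ψ, w.1 = MuForm.mu p ψ ∨ w.1 = MuForm.nu p ψ
  | .nvar _ => False
  | .and ψ₁ ψ₂ => w.2 = v.2 ∧ (w.1 = ψ₁ ∨ w.1 = ψ₂)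
  | .or ψ₁ ψ₂ => w.2 = v.2 ∧ (w.1 = ψ₁ ∨ w.1 = ψ₂)
  | .box ψ => w.1 = ψ ∧ R v.2 w.2
  | .dia ψ => w.1 = ψ ∧ R v.2 w.2
  | .mu _ ψ => w.2 = v.2 ∧ w.1 = ψ
  | .nu _ ψ => w.2 = v.2 ∧ w.1 = ψ

/-- The priority of a vertex `(ψ, s)` of the model-checking game:
`2⌈α(ψ)/2⌉ − 1` if `ψ` is a `μ`-formula with `α(ψ) > 0`, `2⌊α(ψ)/2⌋` if `ψ` is
a `ν`-formula with `α(ψ) > 0`, and `0` otherwise. -/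
noncomputable def mcPrio : MuForm P → ℕ
  | .mu p ψ => if 0 < (MuForm.mu p ψ).alt then 2 * (((MuForm.mu p ψ).alt + 1) / 2) - 1 else 0
  | .nu p ψ => if 0 < (MuForm.nu p ψ).alt then 2 * ((MuForm.nu p ψ).alt / 2) else 0
  | _ => 0

open Classical in
/-- The model-checking parity game `G(φ)` for a μ-calculus formula `φ` (in
normal form), a Kripke structure with transition relation `R`, and a valuation
`κ`: its vertices are the pairs `(ψ, s)` with `ψ` a subformula of `φ` and `s`
a state. -/
noncomputable def mcGame (R : S → S → Prop) (φ : MuForm P) (κ : P → Set S) :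
    ParityGame ({ψ : MuForm P // ψ ∈ φ.subformulas} × S) where
  owner := fun v => if mcPlayer0 φ κ (v.1.1, v.2) then 0 else 1
  E := fun v w => mcEdge R φ (v.1.1, v.2) (w.1.1, w.2)
  prio := fun v => mcPrio v.1.1
  finRange := by
    have h : (Set.range fun ψ : {ψ : MuForm P // ψ ∈ φ.subformulas} =>
        mcPrio ψ.1).Finite := Set.finite_range _
    exact h.subset (by rintro _ ⟨v, rfl⟩; exact ⟨v.1, rfl⟩)


/-! ### Auxiliary list lemmas -/

section ListAux

variable {V : Type*}

theorem ofFn_get_nat (π : ℕ → V) (i : ℕ) {k : ℕ} (hk : k < i + 1) :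
    (List.ofFn fun j : Fin (i + 1) => π j).get
      ⟨k, by simpa using hk⟩ = π k := by
  rw [List.get_ofFn]
  rfl

theorem ofFn_succ_nat (π : ℕ → V) (i : ℕ) :
    (List.ofFn fun j : Fin (i + 1) => π j) =
      π 0 :: List.ofFn fun j : Fin i => π (j + 1) := by
  simp [List.ofFn_succ, Fin.val_succ]

theorem ofFn_head?_nat (π : ℕ → V) (i : ℕ) :
    (List.ofFn fun j : Fin (i + 1) => π j).head? = some (π 0) := by
  rw [ofFn_succ_nat]; rfl

theorem ofFn_getLast?_nat (π : ℕ → V) (i : ℕ) :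
    (List.ofFn fun j : Fin (i + 1) => π j).getLast? = some (π i) := by
  have h : i < i + 1 := by omega
  have := ofFn_get_nat π i h
  rw [List.getLast?_eq_getElem?, List.length_ofFn]
  simp only [Nat.add_sub_cancel]
  rw [List.getElem?_eq_getElem (by simp)]
  rw [List.get_eq_getElem] at this
  rw [this]

theorem ofFn_chain' (R : V → V → Prop) (π : ℕ → V) (hπ : ∀ n, R (π n) (π (n + 1)))
    (i : ℕ) : (List.ofFn fun j : Fin (i + 1) => π j).Chain' R := by
  unfold List.Chain'
  rw [List.isChain_iff_getElem]
  intro k hk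
  simp only [List.length_ofFn] at hk
  simp only [List.getElem_ofFn]
  exact hπ k

theorem take_getLast?_nat (l : List V) (i : ℕ) (h : i < l.length) :
    (l.take (i + 1)).getLast? = some (l.get ⟨i, h⟩) := by
  rw [List.getLast?_take]
  simp [List.getElem?_eq_getElem h, Option.or]

theorem take_head?_nat (l : List V) (i : ℕ) :
    (l.take (i + 1)).head? = l.head? := by
  cases l <;> simp

end ListAux

namespace ParityGame

variable {V W : Type*}

/-- Prepend a vertex to an infinite play. -/
def prep (v : V) (π : ℕ → V) : ℕ → V
  | 0 => v
  | n + 1 => π n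

theorem prep_eta (π : ℕ → V) : prep (π 0) (fun n => π (n + 1)) = π := by
  funext n; cases n <;> rfl

theorem infOften_prep (G : ParityGame V) (v : V) (π : ℕ → V) :
    G.InfOften (prep v π) = G.InfOften π := by
  ext c
  constructor
  · intro h N
    obtain ⟨n, hn, hc⟩ := h (N + 1)
    obtain ⟨m, rfl⟩ : ∃ m, n = m + 1 := ⟨n - 1, by omega⟩
    exact ⟨m, by omega, hc⟩
  · intro h N
    obtain ⟨n, hn, hc⟩ := h N
    exact ⟨n + 1, by omega, hc⟩

theorem winInf_prep (G : ParityGame V) (v : V) (π : ℕ → V) :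
    G.WinInf (prep v π) ↔ G.WinInf π := by
  unfold WinInf; rw [infOften_prep]

theorem wins0_of_edge (G : ParityGame V) {v₀ w : V} (hown : G.owner v₀ = 1)
    (hE : G.E v₀ w) (h : G.Wins0 v₀) : G.Wins0 w := by
  classical
  obtain ⟨σ, hvalid, hinf, hfin⟩ := h
  set σ' : List V → V := fun l => if l.head? = some w then σ (v₀ :: l) else σ l with hσ'
  refine ⟨σ', ?_, ?_, ?_⟩
  · intro l x hchain hlast hx hnd
    by_cases hh : l.head? = some w
    · simp only [hσ', if_pos hh]
      have hchain' : (v₀ :: l).Chain' G.E := by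
        unfold List.Chain'
        rw [List.isChain_cons]
        refine ⟨fun y hy => ?_, hchain⟩
        rw [Option.mem_def, hh, Option.some_inj] at hy
        rw [← hy]; exact hE
      have hlast' : (v₀ :: l).getLast? = some x := by
        rw [List.getLast?_cons, hlast]; rfl
      exact hvalid _ x hchain' hlast' hx hnd
    · simp only [hσ', if_neg hh]
      exact hvalid l x hchain hlast hx hnd
  · intro π hπ0 hplay hconf
    have hplay' : G.InfPlay (prep v₀ π) := by
      intro i; cases i with
      | zero => show G.E v₀ (π 0); rw [hπ0]; exact hE
      | succ i => exact hplay i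
    have hconf' : G.ConformsInf σ (prep v₀ π) := by
      intro i hi
      cases i with
      | zero =>
        rw [show prep v₀ π 0 = v₀ from rfl, hown] at hi
        exact absurd hi (by decide)
      | succ i =>
        have hi' : G.owner (π i) = 0 := hi
        have hcond : (List.ofFn fun j : Fin (i + 1) => π ↑j).head? = some w := by
          rw [ofFn_head?_nat, hπ0]
        have hthis := hconf i hi'
        simp only [hσ', if_pos hcond] at hthis
        show π (i + 1) = σ (List.ofFn fun j : Fin (i + 2) => prep v₀ π ↑j)
        rw [ofFn_succ_nat (prep v₀ π) (i + 1)]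
        exact hthis
    exact (winInf_prep G v₀ π).1 (hinf _ rfl hplay' hconf')
  · intro l hplayl hconfl
    obtain ⟨hhead, hchain, hdead⟩ := hplayl
    have hlne : l ≠ [] := by intro h; rw [h] at hhead; simp at hhead
    obtain ⟨x, hx⟩ : ∃ x, l.getLast? = some x := by
      cases h : l.getLast? with
      | none => exact absurd (List.getLast?_eq_none_iff.1 h) hlne
      | some x => exact ⟨x, rfl⟩
    have hlast' : (v₀ :: l).getLast? = some x := by
      rw [List.getLast?_cons, hx]; rfl
    have hplay' : G.FinPlay v₀ (v₀ :: l) := by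
      refine ⟨rfl, ?_, ?_⟩
      · unfold List.Chain'
        rw [List.isChain_cons]
        refine ⟨fun y hy => ?_, hchain⟩
        rw [Option.mem_def, hhead, Option.some_inj] at hy
        rw [← hy]; exact hE
      · intro y hy
        rw [Option.mem_def, hlast', Option.some_inj] at hy
        rw [← hy]
        exact hdead x (by rw [Option.mem_def, hx])
    have hconf' : G.ConformsFin σ (v₀ :: l) := by
      intro i h hi
      cases i with
      | zero =>
        rw [show (v₀ :: l).get ⟨0, by omega⟩ = v₀ from rfl, hown] at hi
        exact absurd hi (by decide)
      | succ i =>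
        have h' : i + 1 < l.length := by simpa using h
        have hi' : G.owner (l.get ⟨i, by omega⟩) = 0 := hi
        have hcond : (l.take (i + 1)).head? = some w := by
          rw [take_head?_nat, hhead]
        have hthis := hconfl i h' hi'
        simp only [hσ', if_pos hcond] at hthis
        show l.get ⟨i + 1, h'⟩ = σ ((v₀ :: l).take (i + 1 + 1))
        rw [List.take_succ_cons]
        exact hthis
    have hwin := hfin (v₀ :: l) hplay' hconf'
    intro y hy
    rw [Option.mem_def, hx, Option.some_inj] at hy
    exact hwin y (by rw [Option.mem_def, hlast', hy])

theorem wins0_fork_rev (G : ParityGame V) {v₀ a b : V} (hown : G.owner v₀ = 1)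
    (hsucc : ∀ w, G.E v₀ w ↔ w = a ∨ w = b)
    (ha : G.Wins0 a) (hb : G.Wins0 b) : G.Wins0 v₀ := by
  classical
  obtain ⟨σa, hva, hia, hfa⟩ := ha
  obtain ⟨σb, hvb, hib, hfb⟩ := hb
  set σ : List V → V := fun l =>
    if 2 ≤ l.length then
      (if l.tail.head? = some a then σa l.tail else σb l.tail)
    else σa l with hσ
  refine ⟨σ, ?_, ?_, ?_⟩
  · intro l x hchain hlast hx hnd
    by_cases h2 : 2 ≤ l.length
    · obtain ⟨x₀, y, rest, rfl⟩ : ∃ x₀ y rest, l = x₀ :: y :: rest := by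
        match l with
        | [] => simp at h2
        | [x₀] => simp at h2
        | x₀ :: y :: rest => exact ⟨x₀, y, rest, rfl⟩
      have htail : (x₀ :: y :: rest).tail = y :: rest := rfl
      have hchaint : (y :: rest).Chain' G.E := hchain.tail
      have hlastt : (y :: rest).getLast? = some x := by
        rw [List.getLast?_cons_cons] at hlast; exact hlast
      by_cases hy : (y :: rest).head? = some a
      · simp only [hσ, if_pos h2, htail, if_pos hy]
        exact hva _ x hchaint hlastt hx hnd
      · simp only [hσ, if_pos h2, htail, if_neg hy]
        exact hvb _ x hchaint hlastt hx hnd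
    · simp only [hσ, if_neg h2]
      exact hva l x hchain hlast hx hnd
  · intro π hπ0 hplay hconf
    have hE1 : G.E v₀ (π 1) := by rw [← hπ0]; exact hplay 0
    have hab := (hsucc (π 1)).1 hE1
    have hπeq : prep v₀ (fun n => π (n + 1)) = π := by
      funext n; cases n with
      | zero => exact hπ0.symm
      | succ n => rfl
    rw [← hπeq, winInf_prep]
    have hplay' : G.InfPlay (fun n => π (n + 1)) := fun i => hplay (i + 1)
    have key : ∀ (c : V) (σc : List V → V),
        π 1 = c →
        ((c = a → σc = σa) ∧ (c ≠ a → σc = σb)) →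
        G.ConformsInf σc (fun n => π (n + 1)) := by
      intro c σc hc hcc i hi
      have hi' : G.owner (π (i + 1)) = 0 := hi
      have hthis := hconf (i + 1) hi'
      have hofn : (List.ofFn fun j : Fin (i + 2) => π ↑j) =
          π 0 :: List.ofFn fun j : Fin (i + 1) => π (↑j + 1) :=
        ofFn_succ_nat π (i + 1)
      have hlen : 2 ≤ (List.ofFn fun j : Fin (i + 2) => π ↑j).length := by
        simp
      have hhd : (List.ofFn fun j : Fin (i + 1) => π (↑j + 1)).head? = some (π 1) :=
        ofFn_head?_nat (fun n => π (n + 1)) i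
      simp only [hσ, hofn, List.tail_cons, hhd, hc, List.length_cons,
        List.length_ofFn] at hthis
      rw [if_pos (by omega)] at hthis
      show π (i + 2) = σc (List.ofFn fun j : Fin (i + 1) => π (↑j + 1))
      by_cases hca : c = a
      · rw [(hcc.1 hca)]
        rw [if_pos (by rw [hca])] at hthis
        exact hthis
      · rw [(hcc.2 hca)]
        rw [if_neg (by simp [hca])] at hthis
        exact hthis
    by_cases hca : π 1 = a
    · exact hia _ hca hplay' (key a σa hca ⟨fun _ => rfl, fun h => absurd rfl h⟩)
    · have hcb : π 1 = b := hab.resolve_left hca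
      exact hib _ hcb hplay'
        (key (π 1) σb rfl ⟨fun h => absurd h hca, fun _ => rfl⟩)
  · intro l hplayl hconfl
    obtain ⟨hhead, hchain, hdead⟩ := hplayl
    obtain ⟨y, rest, rfl⟩ : ∃ y rest, l = v₀ :: y :: rest := by
      match l with
      | [] => simp at hhead
      | [z] =>
        have hz : z = v₀ := by simpa using hhead
        exfalso
        have hd : G.DeadEnd v₀ := hz ▸ hdead z (by simp)
        exact hd a ((hsucc a).2 (Or.inl rfl))
      | z :: y :: rest =>
        have hz : z = v₀ := by simpa using hhead
        exact ⟨y, rest, by rw [hz]⟩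
    have hEy : G.E v₀ y := (List.isChain_cons.1 hchain).1 y rfl
    have hyab := (hsucc y).1 hEy
    have hplayt : ∀ c, y = c → G.FinPlay c (y :: rest) := by
      intro c hc
      exact ⟨by rw [hc]; rfl, hchain.tail, by
        intro z hz
        exact hdead z (by rw [Option.mem_def, List.getLast?_cons_cons]; exact hz)⟩
    have hconft : ∀ σc : List V → V,
        ((y = a → σc = σa) ∧ (y ≠ a → σc = σb)) →
        G.ConformsFin σc (y :: rest) := by
      intro σc hcc i h hi
      have h' : i + 1 + 1 < (v₀ :: y :: rest).length := by simpa using h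
      have hi' : G.owner ((v₀ :: y :: rest).get ⟨i + 1, by omega⟩) = 0 := hi
      have hthis := hconfl (i + 1) h' hi'
      have htake : (v₀ :: y :: rest).take (i + 1 + 1) = v₀ :: (y :: rest).take (i + 1) :=
        List.take_succ_cons
      have hlen2 : 2 ≤ (v₀ :: (y :: rest).take (i + 1)).length := by
        rw [List.length_cons, List.length_take]
        simp only [List.length_cons] at h'
        omega
      have hhd : ((y :: rest).take (i + 1)).head? = some y := by
        rw [take_head?_nat]; rfl
      simp only [hσ, htake, List.tail_cons, hhd] at hthis
      rw [if_pos hlen2] at hthis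
      show (y :: rest).get ⟨i + 1, h⟩ = σc ((y :: rest).take (i + 1))
      by_cases hya : y = a
      · rw [hcc.1 hya]
        rw [if_pos (by rw [hya])] at hthis
        exact hthis
      · rw [hcc.2 hya]
        rw [if_neg (by simp [hya])] at hthis
        exact hthis
    have hwint : G.WinFin (y :: rest) := by
      by_cases hya : y = a
      · exact hfa _ (hplayt a hya) (hconft σa ⟨fun _ => rfl, fun h => absurd hya h⟩)
      · exact hfb _ (hplayt b (hyab.resolve_left hya))
          (hconft σb ⟨fun h => absurd h hya, fun _ => rfl⟩)
    intro z hz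
    exact hwint z (by rw [Option.mem_def, List.getLast?_cons_cons] at hz; exact hz)

theorem deadEnd_map (G : ParityGame V) (H : ParityGame W) (f : W → V)
    (hedge : ∀ w w', G.E (f w) (f w') ↔ H.E w w')
    (hclosed : ∀ w v, G.E (f w) v → ∃ w', v = f w') (w : W) :
    G.DeadEnd (f w) ↔ H.DeadEnd w := by
  constructor
  · intro h w' hw'; exact h (f w') ((hedge w w').2 hw')
  · intro h v hv
    obtain ⟨w', rfl⟩ := hclosed w v hv
    exact h w' ((hedge w w').1 hv)

theorem chain_in_image (G : ParityGame V) (f : W → V)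
    (hclosed : ∀ w v, G.E (f w) v → ∃ w', v = f w') :
    ∀ l : List V, l.Chain' G.E → (∀ x ∈ l.head?, ∃ w, x = f w) →
      ∃ l' : List W, l = l'.map f := by
  intro l
  induction l with
  | nil => exact fun _ _ => ⟨[], rfl⟩
  | cons x rest ih =>
    intro hchain hhd
    obtain ⟨w, rfl⟩ := hhd x rfl
    cases rest with
    | nil => exact ⟨[w], rfl⟩
    | cons y t =>
      have hxy : G.E (f w) y := (List.isChain_cons.1 hchain).1 y rfl
      obtain ⟨w', hw'⟩ := hclosed w y hxy
      obtain ⟨l', hl'⟩ := ih hchain.tail (fun z hz => by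
        simp only [Option.mem_def, List.head?_cons, Option.some_inj] at hz
        exact ⟨w', by rw [← hz, hw']⟩)
      exact ⟨w :: l', by rw [List.map_cons, ← hl']⟩

theorem wins0_embed (G : ParityGame V) (H : ParityGame W) (f : W → V)
    (hinj : Function.Injective f)
    (howner : ∀ w, G.owner (f w) = H.owner w)
    (hprio : ∀ w, G.prio (f w) = H.prio w)
    (hedge : ∀ w w', G.E (f w) (f w') ↔ H.E w w')
    (hclosed : ∀ w v, G.E (f w) v → ∃ w', v = f w')
    (w₀ : W) : G.Wins0 (f w₀) ↔ H.Wins0 w₀ := by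
  classical
  haveI : Nonempty V := ⟨f w₀⟩
  have hde : ∀ w, G.DeadEnd (f w) ↔ H.DeadEnd w := deadEnd_map G H f hedge hclosed
  have hmapinj : Function.Injective (List.map f) := List.map_injective_iff.2 hinj
  have hchain_iff : ∀ l' : List W, (l'.map f).Chain' G.E ↔ l'.Chain' H.E := by
    intro l'
    unfold List.Chain'
    rw [List.isChain_map]
    exact ⟨fun h => h.imp (fun a b hab => (hedge a b).1 hab),
      fun h => h.imp fun a b hab => (hedge a b).2 hab⟩
  constructor
  · rintro ⟨τ, hvalid, hinf, hfin⟩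
    haveI : Nonempty W := ⟨w₀⟩
    set σ' : List W → W := fun l' => Function.invFun f (τ (l'.map f)) with hσ'
    refine ⟨σ', ?_, ?_, ?_⟩
    · intro l' x hchain hlast hx hnd
      simp only [hσ']
      have hchain2 : (l'.map f).Chain' G.E := (hchain_iff l').2 hchain
      have hlast2 : (l'.map f).getLast? = some (f x) := by
        rw [List.getLast?_map, hlast]; rfl
      have hx2 : G.owner (f x) = 0 := by rw [howner]; exact hx
      have hnd2 : ¬ G.DeadEnd (f x) := fun h => hnd ((hde x).1 h)
      have hE2 := hvalid (l'.map f) (f x) hchain2 hlast2 hx2 hnd2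
      obtain ⟨w', hw'⟩ := hclosed x _ hE2
      rw [hw'] at hE2
      rw [hw', Function.leftInverse_invFun hinj w']
      exact (hedge x w').1 hE2
    · intro ρ hρ0 hplay hconf
      have hπ0 : (fun n => f (ρ n)) 0 = f w₀ := by simp [hρ0]
      have hplay2 : G.InfPlay (fun n => f (ρ n)) := fun i => (hedge _ _).2 (hplay i)
      have hconf2 : G.ConformsInf τ (fun n => f (ρ n)) := by
        intro i hi
        have hi' : H.owner (ρ i) = 0 := by rw [← howner]; exact hi
        have heq : (List.ofFn fun j : Fin (i + 1) => f (ρ ↑j)) =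
            (List.ofFn fun j : Fin (i + 1) => ρ ↑j).map f := by
          rw [List.map_ofFn]; rfl
        have hc := hconf i hi'
        simp only [hσ'] at hc
        have hex : ∃ w, f w = τ ((List.ofFn fun j : Fin (i + 1) => ρ ↑j).map f) := by
          have hnd' : ¬ G.DeadEnd (f (ρ i)) := fun h => h _ (hplay2 i)
          have hEτ := hvalid ((List.ofFn fun j : Fin (i + 1) => ρ ↑j).map f)
            (f (ρ i)) (by
              rw [← heq]; exact ofFn_chain' G.E _ hplay2 i)
            (by rw [← heq]; exact ofFn_getLast?_nat (fun n => f (ρ n)) i)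
            (by rw [howner]; exact hi') hnd'
          obtain ⟨w', hw'⟩ := hclosed (ρ i) _ hEτ
          exact ⟨w', hw'.symm⟩
        show f (ρ (i + 1)) = τ (List.ofFn fun j : Fin (i + 1) => f (ρ ↑j))
        rw [heq, hc]
        exact Function.invFun_eq hex
      have hwin := hinf _ hπ0 hplay2 hconf2
      have hIO : G.InfOften (fun n => f (ρ n)) = H.InfOften ρ := by
        ext c
        constructor
        · intro h N; obtain ⟨n, hn, hc⟩ := h N
          exact ⟨n, hn, by rw [← hprio]; exact hc⟩
        · intro h N; obtain ⟨n, hn, hc⟩ := h N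
          exact ⟨n, hn, by rw [hprio]; exact hc⟩
      unfold ParityGame.WinInf at hwin ⊢
      rw [← hIO]; exact hwin
    · intro l' hplayl hconfl
      obtain ⟨hhead, hchain, hdead⟩ := hplayl
      have hplay2 : G.FinPlay (f w₀) (l'.map f) := by
        refine ⟨by rw [List.head?_map, hhead]; rfl, (hchain_iff l').2 hchain, ?_⟩
        intro y hy
        rw [Option.mem_def, List.getLast?_map] at hy
        cases hl : l'.getLast? with
        | none => rw [hl] at hy; simp at hy
        | some x =>
          rw [hl] at hy; simp only [Option.map_some, Option.some_inj] at hy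
          rw [← hy]
          exact (hde x).2 (hdead x (by rw [Option.mem_def, hl]))
      have hconf2 : G.ConformsFin τ (l'.map f) := by
        intro i h hi
        have h' : i + 1 < l'.length := by simpa using h
        have hg : ∀ (k : ℕ) (hk : k < l'.length),
            (l'.map f).get ⟨k, by simpa using hk⟩ = f (l'.get ⟨k, hk⟩) := by
          intro k hk; exact List.getElem_map f
        have hi' : H.owner (l'.get ⟨i, by omega⟩) = 0 := by
          rw [← howner, ← hg i (by omega)]; exact hi
        have hc := hconfl i h' hi'
        simp only [hσ'] at hc
        have htchain : ((l'.take (i + 1)).map f).Chain' G.E :=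
          (hchain_iff _).2 (hchain.take _)
        have htlast : ((l'.take (i + 1)).map f).getLast? =
            some (f (l'.get ⟨i, by omega⟩)) := by
          rw [List.getLast?_map, take_getLast?_nat l' i (by omega)]; rfl
        have hnd' : ¬ G.DeadEnd (f (l'.get ⟨i, by omega⟩)) := by
          rw [hde]
          intro hdd
          exact hdd (l'.get ⟨i + 1, h'⟩)
            (List.isChain_iff_getElem.1 hchain i (by omega))
        have hEτ := hvalid _ _ htchain htlast
          (by rw [howner]; exact hi') hnd'
        obtain ⟨w', hw'⟩ := hclosed _ _ hEτ
        rw [← List.map_take, hw', hg (i + 1) h', hc, hw',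
          Function.leftInverse_invFun hinj]
      have hwin := hfin _ hplay2 hconf2
      intro y hy
      rw [← howner]
      exact hwin (f y) (by
        rw [Option.mem_def, List.getLast?_map, Option.mem_def.1 hy]; rfl)
  · rintro ⟨σ, hvalid, hinf, hfin⟩
    set τ : List V → V := fun l =>
      if h : ∃ l' : List W, l = l'.map f then f (σ h.choose)
      else if h2 : ∃ p : V × V, l.getLast? = some p.1 ∧ G.E p.1 p.2 then h2.choose.2
      else Classical.arbitrary V with hτ
    refine ⟨τ, ?_, ?_, ?_⟩
    · intro l x hchain hlast hx hnd
      by_cases h : ∃ l' : List W, l = l'.map f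
      · have hch := h.choose_spec
        simp only [hτ, dif_pos h]
        have hlx : (h.choose.map f).getLast? = some x := by rw [← hch]; exact hlast
        rw [List.getLast?_map] at hlx
        cases hl : h.choose.getLast? with
        | none => rw [hl] at hlx; simp at hlx
        | some w =>
          rw [hl] at hlx; simp only [Option.map_some, Option.some_inj] at hlx
          have hchain' : h.choose.Chain' H.E :=
            (hchain_iff _).1 (by rw [← hch]; exact hchain)
          have hE' := hvalid h.choose w hchain' hl
            (by rw [← howner, hlx]; exact hx)
            (fun hd => hnd (by rw [← hlx]; exact (hde w).2 hd))
          rw [← hlx]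
          exact (hedge w _).2 hE'
      · simp only [hτ, dif_neg h]
        have h2 : ∃ p : V × V, l.getLast? = some p.1 ∧ G.E p.1 p.2 := by
          simp only [ParityGame.DeadEnd] at hnd
          push_neg at hnd
          obtain ⟨y, hy⟩ := hnd
          exact ⟨(x, y), hlast, hy⟩
        rw [dif_pos h2]
        have hspec := h2.choose_spec
        have h1 : h2.choose.1 = x :=
          Option.some_inj.1 (hspec.1.symm.trans hlast)
        rw [← h1]; exact hspec.2
    · intro π hπ0 hplay hconf
      have himg : ∀ n, ∃ w, π n = f w := by
        intro n; induction n with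
        | zero => exact ⟨w₀, hπ0⟩
        | succ n ih =>
          obtain ⟨w, hw⟩ := ih
          exact hclosed w _ (by rw [← hw]; exact hplay n)
      choose ρ hρ using himg
      have hρ0 : ρ 0 = w₀ := hinj (by rw [← hρ 0]; exact hπ0)
      have hplay' : H.InfPlay ρ := fun i =>
        (hedge _ _).1 (by rw [← hρ i, ← hρ (i + 1)]; exact hplay i)
      have hconf' : H.ConformsInf σ ρ := by
        intro i hi
        have hi' : G.owner (π i) = 0 := by rw [hρ i, howner]; exact hi
        have hc := hconf i hi'
        have heq : (List.ofFn fun j : Fin (i + 1) => π ↑j) =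
            (List.ofFn fun j : Fin (i + 1) => ρ ↑j).map f := by
          rw [List.map_ofFn]
          congr 1
          funext j
          exact hρ ↑j
        have himage : ∃ l' : List W,
            (List.ofFn fun j : Fin (i + 1) => π ↑j) = l'.map f := ⟨_, heq⟩
        simp only [hτ, dif_pos himage] at hc
        have hch : himage.choose = (List.ofFn fun j : Fin (i + 1) => ρ ↑j) :=
          hmapinj (himage.choose_spec.symm.trans heq)
        rw [hch] at hc
        exact hinj ((hρ (i + 1)).symm.trans hc)
      have hwin := hinf ρ hρ0 hplay' hconf'
      have hIO : G.InfOften π = H.InfOften ρ := by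
        ext c
        constructor
        · intro h N; obtain ⟨n, hn, hc⟩ := h N
          exact ⟨n, hn, by rw [← hprio, ← hρ n]; exact hc⟩
        · intro h N; obtain ⟨n, hn, hc⟩ := h N
          exact ⟨n, hn, by rw [hρ n, hprio]; exact hc⟩
      unfold ParityGame.WinInf at hwin ⊢
      rw [hIO]; exact hwin
    · intro l hplayl hconfl
      obtain ⟨hhead, hchain, hdead⟩ := hplayl
      obtain ⟨l', rfl⟩ := chain_in_image G f hclosed l hchain (fun x hx => by
        rw [Option.mem_def, hhead, Option.some_inj] at hx
        exact ⟨w₀, hx.symm⟩)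
      have hhead' : l'.head? = some w₀ := by
        rw [List.head?_map] at hhead
        cases hl : l'.head? with
        | none => rw [hl] at hhead; simp at hhead
        | some w =>
          rw [hl] at hhead; simp only [Option.map_some, Option.some_inj] at hhead
          rw [hinj hhead]
      have hplay' : H.FinPlay w₀ l' := by
        refine ⟨hhead', (hchain_iff l').1 hchain, ?_⟩
        intro x hx
        refine (hde x).1 (hdead (f x) ?_)
        rw [Option.mem_def, List.getLast?_map, Option.mem_def.1 hx]; rfl
      have hg : ∀ (k : ℕ) (hk : k < l'.length),
          (l'.map f).get ⟨k, by simpa using hk⟩ = f (l'.get ⟨k, hk⟩) := by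
        intro k hk; exact List.getElem_map f
      have hconf' : H.ConformsFin σ l' := by
        intro i h hi
        have h' : i + 1 < (l'.map f).length := by simpa using h
        have hi' : G.owner ((l'.map f).get ⟨i, by omega⟩) = 0 := by
          rw [hg i (by omega), howner]; exact hi
        have hc := hconfl i h' hi'
        have heq : (l'.map f).take (i + 1) = (l'.take (i + 1)).map f :=
          (List.map_take (f := f) (l := l') (i := i + 1)).symm
        have himage : ∃ m : List W, (l'.map f).take (i + 1) = m.map f :=
          ⟨_, heq⟩
        simp only [hτ, dif_pos himage] at hc
        have hch : himage.choose = l'.take (i + 1) :=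
          hmapinj (himage.choose_spec.symm.trans heq)
        rw [hch] at hc
        rw [hg (i + 1) (by simpa using h)] at hc
        exact hinj hc
      have hwin := hfin l' hplay' hconf'
      intro y hy
      rw [Option.mem_def, List.getLast?_map] at hy
      cases hl : l'.getLast? with
      | none => rw [hl] at hy; simp at hy
      | some x =>
        rw [hl] at hy; simp only [Option.map_some, Option.some_inj] at hy
        rw [← hy, howner]
        exact hwin x (by rw [Option.mem_def, hl])

theorem wins0_fork (G : ParityGame V) {v₀ a b : V} (hown : G.owner v₀ = 1)
    (hsucc : ∀ w, G.E v₀ w ↔ w = a ∨ w = b) :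
    G.Wins0 v₀ ↔ G.Wins0 a ∧ G.Wins0 b :=
  ⟨fun h => ⟨wins0_of_edge G hown ((hsucc a).2 (Or.inl rfl)) h,
      wins0_of_edge G hown ((hsucc b).2 (Or.inr rfl)) h⟩,
    fun ⟨ha, hb⟩ => wins0_fork_rev G hown hsucc ha hb⟩

end ParityGame

/-! ### Subformula lemmas -/

theorem MuForm.subformulas_and_left (φ₁ φ₂ : MuForm P) :
    φ₁.subformulas ⊆ (MuForm.and φ₁ φ₂).subformulas := by
  intro x hx
  simp only [subformulas, Finset.mem_insert, Finset.mem_union]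
  exact Or.inr (Or.inl hx)

theorem MuForm.subformulas_and_right (φ₁ φ₂ : MuForm P) :
    φ₂.subformulas ⊆ (MuForm.and φ₁ φ₂).subformulas := by
  intro x hx
  simp only [subformulas, Finset.mem_insert, Finset.mem_union]
  exact Or.inr (Or.inr hx)

theorem MuForm.subformulas_or_left (φ₁ φ₂ : MuForm P) :
    φ₁.subformulas ⊆ (MuForm.or φ₁ φ₂).subformulas := by
  intro x hx
  simp only [subformulas, Finset.mem_insert, Finset.mem_union]
  exact Or.inr (Or.inl hx)

theorem MuForm.subformulas_or_right (φ₁ φ₂ : MuForm P) :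
    φ₂.subformulas ⊆ (MuForm.or φ₁ φ₂).subformulas := by
  intro x hx
  simp only [subformulas, Finset.mem_insert, Finset.mem_union]
  exact Or.inr (Or.inr hx)

theorem MuForm.subformulas_box (φ : MuForm P) :
    φ.subformulas ⊆ (MuForm.box φ).subformulas := by
  intro x hx
  simp only [subformulas, Finset.mem_insert]
  exact Or.inr hx

theorem MuForm.subformulas_dia (φ : MuForm P) :
    φ.subformulas ⊆ (MuForm.dia φ).subformulas := by
  intro x hx
  simp only [subformulas, Finset.mem_insert]
  exact Or.inr hx

theorem MuForm.subformulas_mu (p : P) (φ : MuForm P) :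
    φ.subformulas ⊆ (MuForm.mu p φ).subformulas := by
  intro x hx
  simp only [subformulas, Finset.mem_insert]
  exact Or.inr hx

theorem MuForm.subformulas_nu (p : P) (φ : MuForm P) :
    φ.subformulas ⊆ (MuForm.nu p φ).subformulas := by
  intro x hx
  simp only [subformulas, Finset.mem_insert]
  exact Or.inr hx

theorem MuForm.subformulas_subset :
    ∀ {δ χ : MuForm P}, χ ∈ δ.subformulas → χ.subformulas ⊆ δ.subformulas := by
  intro δ
  induction δ with
  | bot => intro χ h; simp [subformulas] at h; subst h; exact subset_rfl
  | top => intro χ h; simp [subformulas] at h; subst h; exact subset_rfl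
  | var p => intro χ h; simp [subformulas] at h; subst h; exact subset_rfl
  | nvar p => intro χ h; simp [subformulas] at h; subst h; exact subset_rfl
  | and φ₁ φ₂ ih₁ ih₂ =>
    intro χ h
    simp only [subformulas, Finset.mem_insert, Finset.mem_union] at h
    rcases h with h | h | h
    · subst h; exact subset_rfl
    · exact (ih₁ h).trans (subformulas_and_left φ₁ φ₂)
    · exact (ih₂ h).trans (subformulas_and_right φ₁ φ₂)
  | or φ₁ φ₂ ih₁ ih₂ =>
    intro χ h
    simp only [subformulas, Finset.mem_insert, Finset.mem_union] at h
    rcases h with h | h | h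
    · subst h; exact subset_rfl
    · exact (ih₁ h).trans (subformulas_or_left φ₁ φ₂)
    · exact (ih₂ h).trans (subformulas_or_right φ₁ φ₂)
  | box φ ih =>
    intro χ h
    simp only [subformulas, Finset.mem_insert] at h
    rcases h with h | h
    · subst h; exact subset_rfl
    · exact (ih h).trans (subformulas_box φ)
  | dia φ ih =>
    intro χ h
    simp only [subformulas, Finset.mem_insert] at h
    rcases h with h | h
    · subst h; exact subset_rfl
    · exact (ih h).trans (subformulas_dia φ)
  | mu p φ ih =>
    intro χ h
    simp only [subformulas, Finset.mem_insert] at h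
    rcases h with h | h
    · subst h; exact subset_rfl
    · exact (ih h).trans (subformulas_mu p φ)
  | nu p φ ih =>
    intro χ h
    simp only [subformulas, Finset.mem_insert] at h
    rcases h with h | h
    · subst h; exact subset_rfl
    · exact (ih h).trans (subformulas_nu p φ)

theorem MuForm.BoundIn.mono {p : P} {χ δ : MuForm P} (h : MuForm.BoundIn p χ)
    (hsub : χ.subformulas ⊆ δ.subformulas) : MuForm.BoundIn p δ := by
  obtain ⟨ψ, h⟩ := h
  exact ⟨ψ, h.imp (fun hh => hsub hh) (fun hh => hsub hh)⟩

theorem MuForm.free_or_bound :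
    ∀ {χ : MuForm P} {p : P}, MuForm.var p ∈ χ.subformulas →
      p ∈ χ.freeVars ∨ MuForm.BoundIn p χ := by
  intro χ
  induction χ with
  | bot => intro p h; simp [subformulas] at h
  | top => intro p h; simp [subformulas] at h
  | var q => intro p h; simp [subformulas] at h; left; simp [freeVars, h]
  | nvar q => intro p h; simp [subformulas] at h
  | and φ₁ φ₂ ih₁ ih₂ =>
    intro p h
    simp only [subformulas, Finset.mem_insert, Finset.mem_union] at h
    rcases h with h | h | h
    · exact absurd h (by simp)
    · rcases ih₁ h with hf | hb
      · left; exact Set.mem_union_left _ hf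
      · right; exact hb.mono (subformulas_and_left φ₁ φ₂)
    · rcases ih₂ h with hf | hb
      · left; exact Set.mem_union_right _ hf
      · right; exact hb.mono (subformulas_and_right φ₁ φ₂)
  | or φ₁ φ₂ ih₁ ih₂ =>
    intro p h
    simp only [subformulas, Finset.mem_insert, Finset.mem_union] at h
    rcases h with h | h | h
    · exact absurd h (by simp)
    · rcases ih₁ h with hf | hb
      · left; exact Set.mem_union_left _ hf
      · right; exact hb.mono (subformulas_or_left φ₁ φ₂)
    · rcases ih₂ h with hf | hb
      · left; exact Set.mem_union_right _ hf
      · right; exact hb.mono (subformulas_or_right φ₁ φ₂)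
  | box φ ih =>
    intro p h
    simp only [subformulas, Finset.mem_insert] at h
    rcases h with h | h
    · exact absurd h (by simp)
    · rcases ih h with hf | hb
      · left; exact hf
      · right; exact hb.mono (subformulas_box φ)
  | dia φ ih =>
    intro p h
    simp only [subformulas, Finset.mem_insert] at h
    rcases h with h | h
    · exact absurd h (by simp)
    · rcases ih h with hf | hb
      · left; exact hf
      · right; exact hb.mono (subformulas_dia φ)
  | mu q φ ih =>
    intro p h
    simp only [subformulas, Finset.mem_insert] at h
    rcases h with h | h
    · exact absurd h (by simp)
    · rcases ih h with hf | hb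
      · by_cases hpq : p = q
        · right
          exact ⟨φ, Or.inl (by rw [hpq]; exact self_mem_subformulas _)⟩
        · left; exact ⟨hf, by simpa using hpq⟩
      · right; exact hb.mono (subformulas_mu q φ)
  | nu q φ ih =>
    intro p h
    simp only [subformulas, Finset.mem_insert] at h
    rcases h with h | h
    · exact absurd h (by simp)
    · rcases ih h with hf | hb
      · by_cases hpq : p = q
        · right
          exact ⟨φ, Or.inr (by rw [hpq]; exact self_mem_subformulas _)⟩
        · left; exact ⟨hf, by simpa using hpq⟩
      · right; exact hb.mono (subformulas_nu q φ)

theorem mcPlayer0_var_iff {φ ψ : MuForm P} {p : P}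
    (hnf : φ.NormalForm)
    (hsub : ψ.subformulas ⊆ φ.subformulas)
    (hfree : ψ.freeVars ⊆ φ.freeVars)
    (hmem : MuForm.var p ∈ ψ.subformulas)
    (C : Prop) :
    (MuForm.BoundIn p φ ∨ (p ∈ φ.freeVars ∧ C)) ↔
      (MuForm.BoundIn p ψ ∨ (p ∈ ψ.freeVars ∧ C)) := by
  constructor
  · rintro (hb | ⟨hf, hc⟩)
    · rcases MuForm.free_or_bound hmem with hf | hb'
      · exact absurd hb (hnf.2 p (hfree hf))
      · exact Or.inl hb'
    · rcases MuForm.free_or_bound hmem with hf' | hb'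
      · exact Or.inr ⟨hf', hc⟩
      · exact absurd (hb'.mono hsub) (hnf.2 p hf)
  · rintro (hb | ⟨hf, hc⟩)
    · exact Or.inl (hb.mono hsub)
    · exact Or.inr ⟨hfree hf, hc⟩

theorem mcEdge_closed {φ ψ : MuForm P} (hnf : φ.NormalForm)
    (hsub : ψ.subformulas ⊆ φ.subformulas)
    (hfree : ψ.freeVars ⊆ φ.freeVars) {R : S → S → Prop}
    {χ χ' : MuForm P} {s s' : S} (hχ : χ ∈ ψ.subformulas)
    (hχ' : χ' ∈ φ.subformulas)
    (he : mcEdge R φ (χ, s) (χ', s')) : χ' ∈ ψ.subformulas := by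
  cases χ with
  | bot => exact he.elim
  | top => exact he.elim
  | nvar q => exact he.elim
  | var q =>
    obtain ⟨-, hmem, δ, hδ⟩ := he
    have hmem' : χ' ∈ φ.subformulas := hmem
    have hδ' : χ' = MuForm.mu q δ ∨ χ' = MuForm.nu q δ := hδ
    rcases MuForm.free_or_bound hχ with hf | hb
    · exact absurd ⟨δ, hδ'.imp (fun h : χ' = MuForm.mu q δ => h ▸ hmem')
        (fun h : χ' = MuForm.nu q δ => h ▸ hmem')⟩ (hnf.2 q (hfree hf))
    · obtain ⟨δ', hδ'⟩ := hb
      rcases hδ' with h1 | h1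
      · have heq : χ' = MuForm.mu q δ' :=
          hnf.1 q χ' (MuForm.mu q δ') hχ' (hsub h1) ⟨δ, hδ'⟩ ⟨δ', Or.inl rfl⟩
        rw [heq]; exact h1
      · have heq : χ' = MuForm.nu q δ' :=
          hnf.1 q χ' (MuForm.nu q δ') hχ' (hsub h1) ⟨δ, hδ'⟩ ⟨δ', Or.inr rfl⟩
        rw [heq]; exact h1
  | and a b =>
    obtain ⟨-, h0⟩ := he
    have h0' : χ' = a ∨ χ' = b := h0
    rcases h0' with h | h
    · rw [h]
      exact MuForm.subformulas_subset hχ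
        (MuForm.subformulas_and_left a b (MuForm.self_mem_subformulas a))
    · rw [h]
      exact MuForm.subformulas_subset hχ
        (MuForm.subformulas_and_right a b (MuForm.self_mem_subformulas b))
  | or a b =>
    obtain ⟨-, h0⟩ := he
    have h0' : χ' = a ∨ χ' = b := h0
    rcases h0' with h | h
    · rw [h]
      exact MuForm.subformulas_subset hχ
        (MuForm.subformulas_or_left a b (MuForm.self_mem_subformulas a))
    · rw [h]
      exact MuForm.subformulas_subset hχ
        (MuForm.subformulas_or_right a b (MuForm.self_mem_subformulas b))
  | box δ =>
    obtain ⟨h0, -⟩ := he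
    have h : χ' = δ := h0
    rw [h]
    exact MuForm.subformulas_subset hχ
      (MuForm.subformulas_box δ (MuForm.self_mem_subformulas δ))
  | dia δ =>
    obtain ⟨h0, -⟩ := he
    have h : χ' = δ := h0
    rw [h]
    exact MuForm.subformulas_subset hχ
      (MuForm.subformulas_dia δ (MuForm.self_mem_subformulas δ))
  | mu q δ =>
    obtain ⟨-, h0⟩ := he
    have h : χ' = δ := h0
    rw [h]
    exact MuForm.subformulas_subset hχ
      (MuForm.subformulas_mu q δ (MuForm.self_mem_subformulas δ))
  | nu q δ =>
    obtain ⟨-, h0⟩ := he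
    have h : χ' = δ := h0
    rw [h]
    exact MuForm.subformulas_subset hχ
      (MuForm.subformulas_nu q δ (MuForm.self_mem_subformulas δ))

theorem mcGame_embed (R : S → S → Prop) {φ ψ : MuForm P} (κ : P → Set S)
    (hnf : φ.NormalForm)
    (hsub : ψ.subformulas ⊆ φ.subformulas)
    (hfree : ψ.freeVars ⊆ φ.freeVars) (s : S) :
    (mcGame R φ κ).Wins0 (⟨ψ, hsub ψ.self_mem_subformulas⟩, s) ↔
      (mcGame R ψ κ).Wins0 (⟨ψ, ψ.self_mem_subformulas⟩, s) := by
  have key := ParityGame.wins0_embed (mcGame R φ κ) (mcGame R ψ κ)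
    (fun v => (⟨v.1.1, hsub v.1.2⟩, v.2)) ?inj ?own ?prio ?edge ?closed
    (⟨ψ, ψ.self_mem_subformulas⟩, s)
  case inj =>
    rintro ⟨⟨x, hx⟩, sx⟩ ⟨⟨y, hy⟩, sy⟩ h
    simp only [Prod.mk.injEq, Subtype.mk.injEq] at h
    obtain ⟨h1, h2⟩ := h
    subst h1; subst h2; rfl
  case own =>
    classical
    rintro ⟨⟨χ, hχ⟩, t⟩
    show (if mcPlayer0 φ κ (χ, t) then 0 else 1) =
      (if mcPlayer0 ψ κ (χ, t) then 0 else 1)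
    refine if_congr ?_ rfl rfl
    cases χ with
    | var p => exact mcPlayer0_var_iff hnf hsub hfree hχ _
    | bot => exact Iff.rfl
    | top => exact Iff.rfl
    | nvar p => exact Iff.rfl
    | and a b => exact Iff.rfl
    | or a b => exact Iff.rfl
    | box a => exact Iff.rfl
    | dia a => exact Iff.rfl
    | mu p a => exact Iff.rfl
    | nu p a => exact Iff.rfl
  case prio => intro w; rfl
  case edge =>
    rintro ⟨⟨χ, hχ⟩, t⟩ ⟨⟨χ', hχ'⟩, t'⟩
    show mcEdge R φ (χ, t) (χ', t') ↔ mcEdge R ψ (χ, t) (χ', t')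
    cases χ with
    | var p =>
      show (t' = t ∧ χ' ∈ φ.subformulas ∧ _) ↔ (t' = t ∧ χ' ∈ ψ.subformulas ∧ _)
      constructor
      · rintro ⟨h1, -, h3⟩; exact ⟨h1, hχ', h3⟩
      · rintro ⟨h1, -, h3⟩; exact ⟨h1, hsub hχ', h3⟩
    | bot => exact Iff.rfl
    | top => exact Iff.rfl
    | nvar p => exact Iff.rfl
    | and a b => exact Iff.rfl
    | or a b => exact Iff.rfl
    | box a => exact Iff.rfl
    | dia a => exact Iff.rfl
    | mu p a => exact Iff.rfl
    | nu p a => exact Iff.rfl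
  case closed =>
    rintro ⟨⟨χ, hχ⟩, t⟩ ⟨⟨χ', hχ'⟩, t'⟩ he
    exact ⟨(⟨χ', mcEdge_closed hnf hsub hfree hχ hχ' he⟩, t'), rfl⟩
  exact key

/-- Player `0` wins the model-checking game `G(ψ₁∧ψ₂)` from `(ψ₁∧ψ₂, s)` iff
Player `0` wins `G(ψ₁)` from `(ψ₁, s)` and Player `0` wins `G(ψ₂)` from
`(ψ₂, s)`. -/
theorem mcGame_and_wins_iff (R : S → S → Prop) (ψ₁ ψ₂ : MuForm P)
    (hnf : (MuForm.and ψ₁ ψ₂).NormalForm) (κ : P → Set S) (s : S) :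
    (mcGame R (MuForm.and ψ₁ ψ₂) κ).Wins0
        (⟨MuForm.and ψ₁ ψ₂, (MuForm.and ψ₁ ψ₂).self_mem_subformulas⟩, s) ↔
      (mcGame R ψ₁ κ).Wins0 (⟨ψ₁, ψ₁.self_mem_subformulas⟩, s) ∧
        (mcGame R ψ₂ κ).Wins0 (⟨ψ₂, ψ₂.self_mem_subformulas⟩, s) := by
  have hsub1 := MuForm.subformulas_and_left ψ₁ ψ₂
  have hsub2 := MuForm.subformulas_and_right ψ₁ ψ₂
  have hfree1 : ψ₁.freeVars ⊆ (MuForm.and ψ₁ ψ₂).freeVars :=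
    Set.subset_union_left
  have hfree2 : ψ₂.freeVars ⊆ (MuForm.and ψ₁ ψ₂).freeVars :=
    Set.subset_union_right
  have hown : (mcGame R (MuForm.and ψ₁ ψ₂) κ).owner
      (⟨MuForm.and ψ₁ ψ₂, (MuForm.and ψ₁ ψ₂).self_mem_subformulas⟩, s) = 1 := by
    classical
    show (if mcPlayer0 (MuForm.and ψ₁ ψ₂) κ (MuForm.and ψ₁ ψ₂, s) then 0 else 1) = 1
    exact if_neg (fun h => h)
  have hsucc : ∀ w, (mcGame R (MuForm.and ψ₁ ψ₂) κ).E
      (⟨MuForm.and ψ₁ ψ₂, (MuForm.and ψ₁ ψ₂).self_mem_subformulas⟩, s) w ↔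
      w = (⟨ψ₁, hsub1 ψ₁.self_mem_subformulas⟩, s) ∨
        w = (⟨ψ₂, hsub2 ψ₂.self_mem_subformulas⟩, s) := by
    rintro ⟨⟨χ, hχ⟩, t⟩
    show (t = s ∧ (χ = ψ₁ ∨ χ = ψ₂)) ↔ _
    simp only [Prod.mk.injEq, Subtype.mk.injEq]
    tauto
  rw [ParityGame.wins0_fork _ hown hsucc,
    mcGame_embed R κ hnf hsub1 hfree1 s, mcGame_embed R κ hnf hsub2 hfree2 s]
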